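/- (Tournament determines cone type.) Let X be a δ-hyperbolike graph with base vertex x. Let y and y′ be vertices with tournaments F : B_{2δ+1}(y) → ℤ and F′ : B_{2δ+1}(y′) → ℤ. If there is φ ∈ Aut(X) with φ(y) = y′ and F = F′ ∘ φ, then φ maps cone(y) onto cone(y′). -/

import Mathlib

open SimpleGraph Filter

namespace CF

variable {V : Type*}

/-- A walk in a graph is a geodesic if its length realizes the graph distance
between its endpoints. -/
def IsGeodesic (G : SimpleGraph V) {u v : V} (p : G.Walk u v) : Prop :=
  p.length = G.dist u v

/-- `G` is δ-hyperbolic: every geodesic triangle is δ-thin, i.e. each side lies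
in the δ-neighborhood of the union of the other two sides. -/
def IsDeltaHyperbolic (G : SimpleGraph V) (δ : ℝ) : Prop :=
  ∀ ⦃a b c : V⦄ (p : G.Walk a b) (q : G.Walk b c) (r : G.Walk a c),
    IsGeodesic G p → IsGeodesic G q → IsGeodesic G r →
      (∀ z ∈ p.support, ∃ w, (w ∈ q.support ∨ w ∈ r.support) ∧ (G.dist z w : ℝ) ≤ δ) ∧
      (∀ z ∈ q.support, ∃ w, (w ∈ p.support ∨ w ∈ r.support) ∧ (G.dist z w : ℝ) ≤ δ) ∧
      (∀ z ∈ r.support, ∃ w, (w ∈ p.support ∨ w ∈ q.support) ∧ (G.dist z w : ℝ) ≤ δ)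

/-- `G` has uniformly finite valence. -/
def UnifFiniteValence (G : SimpleGraph V) : Prop :=
  ∃ D : ℕ, ∀ v : V, (G.neighborSet v).Finite ∧ (G.neighborSet v).ncard ≤ D

/-- The automorphism group of `G` acts transitively on vertices. -/
def VertexTransitive (G : SimpleGraph V) : Prop :=
  ∀ u v : V, ∃ φ : G ≃g G, φ u = v

/-- A δ-hyperbolike graph: connected, of uniformly finite valence, δ-hyperbolic
(with δ ≥ 0), and vertex-transitive. -/
def Hyperbolike (G : SimpleGraph V) (δ : ℝ) : Prop :=
  G.Connected ∧ UnifFiniteValence G ∧ 0 ≤ δ ∧ IsDeltaHyperbolic G δ ∧ VertexTransitive G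

/-- The ball of radius `n` about `x` (as a vertex set). -/
def ball (G : SimpleGraph V) (x : V) (n : ℕ) : Set V := {y | G.dist x y ≤ n}

/-- A formal power series over ℝ is rational if `q·P = p` for polynomials `p`, `q`
with `q(0) ≠ 0`. -/
def IsRationalPS (P : PowerSeries ℝ) : Prop :=
  ∃ p q : Polynomial ℝ, q.coeff 0 ≠ 0 ∧ (q : PowerSeries ℝ) * P = (p : PowerSeries ℝ)

/-- Two geodesics starting at the same point `T`-synchronously fellow travel:
`d(γ(ℓ−i), γ′(ℓ′−i)) ≤ T` for all `0 ≤ i ≤ min(ℓ,ℓ′)`. -/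
def SyncFellowTravel (G : SimpleGraph V) (T : ℝ) {x y z : V}
    (p : G.Walk x y) (q : G.Walk x z) : Prop :=
  ∀ i : ℕ, i ≤ min p.length q.length →
    (G.dist (p.getVert (p.length - i)) (q.getVert (q.length - i)) : ℝ) ≤ T

/-- `z` is a competitor of `y` (with respect to the base point `x`):
`z ∈ B_{2δ+1}(y)`, `d(x,z) ≤ d(x,y)`, and some geodesic from `x` to `z`
`(2δ+1)`-synchronously fellow travels every geodesic from `x` to `y`. -/
def Competitor (G : SimpleGraph V) (δ : ℝ) (x y z : V) : Prop :=
  (G.dist y z : ℝ) ≤ 2*δ+1 ∧ G.dist x z ≤ G.dist x y ∧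
  ∃ p : G.Walk x z, IsGeodesic G p ∧
    ∀ q : G.Walk x y, IsGeodesic G q → SyncFellowTravel G (2*δ+1) p q

/-- `F` is a tournament at `y` (with base point `x`); only the values of `F` on
the ball `B_{2δ+1}(y)` are constrained. -/
def Tournament (G : SimpleGraph V) (δ : ℝ) (x y : V) (F : V → ℤ) : Prop :=
  (∀ z : V, (G.dist y z : ℝ) ≤ 2*δ+1 →
    (G.dist x z : ℤ) - (G.dist x y : ℤ) ≤ F z ∧ F z ≤ (G.dist y z : ℤ)) ∧
  (∀ z : V, Competitor G δ x y z → (G.dist x z : ℤ) = (G.dist x y : ℤ) + F z)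

/-- Tournaments `(y,F)` and `(y',F')` have the same type: some automorphism `φ`
carries `y` to `y'` with `F = F' ∘ φ` (on the ball `B_{2δ+1}(y)`). -/
def SameTournamentType (G : SimpleGraph V) (δ : ℝ) (y y' : V) (F F' : V → ℤ) : Prop :=
  ∃ φ : G ≃g G, φ y = y' ∧ ∀ z : V, (G.dist y z : ℝ) ≤ 2*δ+1 → F z = F' (φ z)

/-- The cone of `y` with respect to the base point `x`. -/
def cone (G : SimpleGraph V) (x y : V) : Set V :=
  {z | G.dist x z = G.dist x y + G.dist y z}

/-- There is a quasi-isometry from the vertices of `G` (with the path metric) to ℝ. -/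
def QuasiIsometricToReal (G : SimpleGraph V) : Prop :=
  ∃ (f : V → ℝ) (C : ℝ), 1 ≤ C ∧
    (∀ u v : V, (G.dist u v : ℝ)/C - C ≤ |f u - f v| ∧ |f u - f v| ≤ C * G.dist u v + C) ∧
    (∀ r : ℝ, ∃ v : V, |r - f v| ≤ C)

/-- `G` is nonelementary: infinitely many vertices and not quasi-isometric to ℝ. -/
def Nonelementary (G : SimpleGraph V) : Prop :=
  Infinite V ∧ ¬ QuasiIsometricToReal G

/-- `ω` is an opposite series of the power series with (positive) coefficients `a`:
the polynomials `Xₙ(P)(s) = Σ_{k≤n} (a_{n-k}/aₙ) s^k` accumulate coefficientwise at `ω`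
along some strictly increasing sequence of indices. -/
def OppositeSeries (a : ℕ → ℝ) (ω : ℕ → ℝ) : Prop :=
  ∃ φ : ℕ → ℕ, StrictMono φ ∧
    ∀ k : ℕ, Tendsto (fun j => a (φ j - k) / a (φ j)) atTop (nhds (ω k))

end CF

namespace CF


section AuxLemmas

variable {V : Type*} {G : SimpleGraph V}

def wtake {u v : V} : (p : G.Walk u v) → (n : ℕ) → G.Walk u (p.getVert n)
  | Walk.nil, _ => Walk.nil
  | Walk.cons _ _, 0 => Walk.nil
  | Walk.cons h p, n + 1 => Walk.cons h (wtake p n)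

def wdrop {u v : V} : (p : G.Walk u v) → (n : ℕ) → G.Walk (p.getVert n) v
  | Walk.nil, _ => Walk.nil
  | Walk.cons h p, 0 => Walk.cons h p
  | Walk.cons _ p, n + 1 => wdrop p n

@[simp] lemma wtake_length {u v : V} (p : G.Walk u v) (n : ℕ) :
    (wtake p n).length = min n p.length := by
  induction p generalizing n with
  | nil => simp [wtake]
  | cons h p ih =>
    cases n with
    | zero => simp [wtake]; rfl
    | succ n => simp [wtake, ih]

@[simp] lemma wdrop_length {u v : V} (p : G.Walk u v) (n : ℕ) :
    (wdrop p n).length = p.length - n := by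
  induction p generalizing n with
  | nil => simp [wdrop]
  | cons h p ih =>
    cases n with
    | zero => simp [wdrop]; rfl
    | succ n => simp [wdrop, ih]

lemma wtake_getVert {u v : V} (p : G.Walk u v) (n i : ℕ) (h : i ≤ n) :
    (wtake p n).getVert i = p.getVert i := by
  induction p generalizing n i with
  | nil => rfl
  | cons a p ih =>
    cases n with
    | zero =>
      have : i = 0 := by omega
      subst this; rfl
    | succ n =>
      cases i with
      | zero => rfl
      | succ i => simpa [wtake] using ih n i (by omega)

lemma wdrop_getVert {u v : V} (p : G.Walk u v) (n k : ℕ) :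
    (wdrop p n).getVert k = p.getVert (n + k) := by
  induction p generalizing n k with
  | nil => rfl
  | cons h p ih =>
    cases n with
    | zero => simp [wdrop]; rfl
    | succ n =>
      have : n + 1 + k = (n + k) + 1 := by omega
      rw [this]
      simpa [wdrop] using ih n k

lemma exists_geodesic (hc : G.Connected) (u v : V) : ∃ p : G.Walk u v, IsGeodesic G p :=
  hc.exists_walk_length_eq_dist u v

lemma geo_dist_getVert_getVert (hc : G.Connected) {x y : V} {p : G.Walk x y}
    (hp : IsGeodesic G p) {i j : ℕ} (hij : i ≤ j) (hj : j ≤ p.length) :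
    G.dist (p.getVert i) (p.getVert j) = j - i := by
  have hp' : p.length = G.dist x y := hp
  have e1 : (wdrop p i).getVert (j - i) = p.getVert j := by
    rw [wdrop_getVert]; congr 1; omega
  have h1 : G.dist (p.getVert i) (p.getVert j) ≤ j - i := by
    have := SimpleGraph.dist_le ((wtake (wdrop p i) (j - i)).copy rfl e1)
    simp only [Walk.length_copy, wtake_length, wdrop_length] at this
    omega
  have ha : G.dist x (p.getVert i) ≤ i := by
    have := SimpleGraph.dist_le (wtake p i)
    simp only [wtake_length] at this
    omega
  have hb : G.dist (p.getVert j) y ≤ p.length - j := by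
    have := SimpleGraph.dist_le (wdrop p j)
    simpa using this
  have t1 := hc.dist_triangle (u := x) (v := p.getVert i) (w := y)
  have t2 := hc.dist_triangle (u := p.getVert i) (v := p.getVert j) (w := y)
  omega

lemma geo_dist_start_getVert (hc : G.Connected) {x y : V} {p : G.Walk x y}
    (hp : IsGeodesic G p) {j : ℕ} (hj : j ≤ p.length) :
    G.dist x (p.getVert j) = j := by
  have := geo_dist_getVert_getVert hc hp (Nat.zero_le j) hj
  rwa [Walk.getVert_zero, Nat.sub_zero] at this

lemma geo_dist_getVert_end (hc : G.Connected) {x y : V} {p : G.Walk x y}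
    (hp : IsGeodesic G p) {i : ℕ} (hi : i ≤ p.length) :
    G.dist (p.getVert i) y = p.length - i := by
  have := geo_dist_getVert_getVert hc hp hi (le_refl p.length)
  rwa [Walk.getVert_length] at this

lemma geo_dist_getVert_real (hc : G.Connected) {x y : V} {p : G.Walk x y}
    (hp : IsGeodesic G p) {i j : ℕ} (hi : i ≤ p.length) (hj : j ≤ p.length) :
    (G.dist (p.getVert i) (p.getVert j) : ℝ) = |(i : ℝ) - (j : ℝ)| := by
  rcases le_total i j with h | h
  · rw [geo_dist_getVert_getVert hc hp h hj, Nat.cast_sub h, abs_sub_comm,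
      abs_of_nonneg (sub_nonneg.mpr (by exact_mod_cast h))]
  · rw [SimpleGraph.dist_comm, geo_dist_getVert_getVert hc hp h hi, Nat.cast_sub h,
      abs_of_nonneg (sub_nonneg.mpr (by exact_mod_cast h))]

lemma iso_dist (hc : G.Connected) (φ : G ≃g G) (a b : V) :
    G.dist (φ a) (φ b) = G.dist a b := by
  have key : ∀ (ψ : G ≃g G) (a b : V), G.dist (ψ a) (ψ b) ≤ G.dist a b := by
    intro ψ a b
    obtain ⟨p, hp⟩ := hc.exists_walk_length_eq_dist a b
    calc G.dist (ψ a) (ψ b) ≤ (p.map ψ.toHom).length := SimpleGraph.dist_le _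
      _ = G.dist a b := by rw [Walk.length_map, hp]
  refine le_antisymm (key φ a b) ?_
  have := key φ.symm (φ a) (φ b)
  simpa using this


/-- The key hyperbolicity lemma: on a geodesic `g` from `x` to a point `e` that is
"beyond" `y'` (in the sense `d(y',e) + d(x,y') ≤ |g| + 2`), the vertex of `g` at
distance `d(x,y') - 1` from `x` is a competitor of `y'`. -/
lemma competitor_of_far_geodesic (hc : G.Connected) {δ : ℝ} (hδ : 0 ≤ δ)
    (hhyp : IsDeltaHyperbolic G δ) {x y' e : V} {g : G.Walk x e} (hg : IsGeodesic G g)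
    {m : ℕ} (hm : G.dist x y' = m) (hm1 : 1 ≤ m) (hmg : m - 1 ≤ g.length)
    (hge : G.dist y' e + m ≤ g.length + 2) :
    Competitor G δ x y' (g.getVert (m - 1)) := by
  have core : ∀ (q : G.Walk x y'), IsGeodesic G q → ∀ i : ℕ, i ≤ m - 1 →
      (G.dist (g.getVert (m - 1 - i)) (q.getVert (m - i)) : ℝ) ≤ 2*δ + 1 := by
    intro q hq i hi
    have hqlen : q.length = m := by rw [(hq : q.length = G.dist x y'), hm]
    obtain ⟨h, hh⟩ := exists_geodesic hc y' e
    have hhlen : h.length = G.dist y' e := hh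
    obtain ⟨w, hw, hwd⟩ := (hhyp q h g hq hh hg).2.2 (g.getVert (m - 1 - i))
      (Walk.mem_support_iff_exists_getVert.mpr ⟨m - 1 - i, rfl, by omega⟩)
    have htl : m - 1 - i ≤ g.length := by omega
    have hxa : G.dist x (g.getVert (m - 1 - i)) = m - 1 - i :=
      geo_dist_start_getVert hc hg htl
    have hae : G.dist (g.getVert (m - 1 - i)) e = g.length - (m - 1 - i) :=
      geo_dist_getVert_end hc hg htl
    have him : m - i ≤ q.length := by omega
    have hq2 : G.dist y' (q.getVert (m - i)) = i := by
      rw [SimpleGraph.dist_comm, geo_dist_getVert_end hc hq him, hqlen]; omega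
    have hti : ((m - 1 - i : ℕ) : ℝ) = (m : ℝ) - 1 - i := by
      have h1 : (m - 1 - i) + i + 1 = m := by omega
      have h2 : (((m - 1 - i) + i + 1 : ℕ) : ℝ) = (m : ℝ) := by exact_mod_cast h1
      push_cast at h2; linarith
    have hmi : ((m - i : ℕ) : ℝ) = (m : ℝ) - i := by
      have : i ≤ m := by omega
      rw [Nat.cast_sub this]
    rcases hw with hwq | hwh
    · -- close point on the side `q` from `x` to `y'`
      obtain ⟨j, rfl, hjle⟩ := Walk.mem_support_iff_exists_getVert.mp hwq
      have hxw : G.dist x (q.getVert j) = j := geo_dist_start_getVert hc hq hjle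
      have hqa : (G.dist (q.getVert j) (g.getVert (m - 1 - i)) : ℝ) ≤ δ := by
        rw [SimpleGraph.dist_comm]; exact hwd
      have e1 : ((m - 1 - i : ℕ) : ℝ) ≤ (j : ℝ) + δ := by
        have htr := hc.dist_triangle (u := x) (v := q.getVert j) (w := g.getVert (m - 1 - i))
        rw [hxa, hxw] at htr
        have htr' : ((m - 1 - i : ℕ) : ℝ) ≤ (j : ℝ) + (G.dist (q.getVert j) (g.getVert (m - 1 - i)) : ℝ) := by
          exact_mod_cast htr
        linarith
      have e2 : (j : ℝ) ≤ ((m - 1 - i : ℕ) : ℝ) + δ := by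
        have htr := hc.dist_triangle (u := x) (v := g.getVert (m - 1 - i)) (w := q.getVert j)
        rw [hxa, hxw] at htr
        have htr' : (j : ℝ) ≤ ((m - 1 - i : ℕ) : ℝ) + (G.dist (g.getVert (m - 1 - i)) (q.getVert j) : ℝ) := by
          exact_mod_cast htr
        linarith
      have hQ : (G.dist (q.getVert j) (q.getVert (m - i)) : ℝ) = |(j : ℝ) - ((m - i : ℕ) : ℝ)| :=
        geo_dist_getVert_real hc hq hjle him
      have habs : |(j : ℝ) - ((m - i : ℕ) : ℝ)| ≤ δ + 1 := by
        rw [abs_le]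
        constructor <;> [skip; skip] <;>
          · rw [hmi]
            rw [hti] at e1 e2
            linarith
      have hT := hc.dist_triangle (u := g.getVert (m - 1 - i)) (v := q.getVert j)
        (w := q.getVert (m - i))
      have hT' : (G.dist (g.getVert (m - 1 - i)) (q.getVert (m - i)) : ℝ)
          ≤ (G.dist (g.getVert (m - 1 - i)) (q.getVert j) : ℝ)
            + (G.dist (q.getVert j) (q.getVert (m - i)) : ℝ) := by exact_mod_cast hT
      rw [hQ] at hT'
      linarith
    · -- close point on the side `h` from `y'` to `e`
      obtain ⟨k, rfl, hkle⟩ := Walk.mem_support_iff_exists_getVert.mp hwh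
      have hky' : G.dist (h.getVert k) y' = k := by
        rw [SimpleGraph.dist_comm]; exact geo_dist_start_getVert hc hh hkle
      have hke : G.dist (h.getVert k) e = h.length - k := geo_dist_getVert_end hc hh hkle
      -- bound k ≤ δ + 1 - i
      have f2 := hc.dist_triangle (u := g.getVert (m - 1 - i)) (v := h.getVert k) (w := e)
      rw [hae, hke] at f2
      have f2' : ((g.length - (m - 1 - i) : ℕ) : ℝ)
          ≤ (G.dist (g.getVert (m - 1 - i)) (h.getVert k) : ℝ) + ((h.length - k : ℕ) : ℝ) := by
        exact_mod_cast f2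
      have c1 : ((g.length - (m - 1 - i) : ℕ) : ℝ) = (g.length : ℝ) - ((m - 1 - i : ℕ) : ℝ) := by
        rw [Nat.cast_sub htl]
      have c2 : ((h.length - k : ℕ) : ℝ) = (h.length : ℝ) - k := by
        rw [Nat.cast_sub hkle]
      have f5' : (G.dist y' e : ℝ) + (m : ℝ) ≤ (g.length : ℝ) + 2 := by exact_mod_cast hge
      have f4' : (h.length : ℝ) = (G.dist y' e : ℝ) := by exact_mod_cast hhlen
      have hkb : (k : ℝ) ≤ δ + 1 - i := by
        rw [c1, c2, hti] at f2'
        linarith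
      have t1 := hc.dist_triangle (u := g.getVert (m - 1 - i)) (v := y') (w := q.getVert (m - i))
      have t2 := hc.dist_triangle (u := g.getVert (m - 1 - i)) (v := h.getVert k) (w := y')
      rw [hq2] at t1
      rw [hky'] at t2
      have T : G.dist (g.getVert (m - 1 - i)) (q.getVert (m - i))
          ≤ G.dist (g.getVert (m - 1 - i)) (h.getVert k) + k + i := by omega
      have T' : (G.dist (g.getVert (m - 1 - i)) (q.getVert (m - i)) : ℝ)
          ≤ (G.dist (g.getVert (m - 1 - i)) (h.getVert k) : ℝ) + (k : ℝ) + (i : ℝ) := by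
        exact_mod_cast T
      linarith
  -- assemble the competitor
  obtain ⟨q0, hq0⟩ := exists_geodesic hc x y'
  have hq0len : q0.length = m := by rw [(hq0 : q0.length = G.dist x y'), hm]
  have hy'm : q0.getVert m = y' := by rw [← hq0len, Walk.getVert_length]
  refine ⟨?_, ?_, wtake g (m - 1), ?_, ?_⟩
  · have h0 := core q0 hq0 0 (Nat.zero_le _)
    rw [Nat.sub_zero, Nat.sub_zero, hy'm] at h0
    rw [SimpleGraph.dist_comm]
    exact h0
  · rw [geo_dist_start_getVert hc hg hmg, hm]; omega
  · show (wtake g (m - 1)).length = G.dist x (g.getVert (m - 1))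
    rw [wtake_length, geo_dist_start_getVert hc hg hmg]
    omega
  · intro q hq
    have hqlen : q.length = m := by rw [(hq : q.length = G.dist x y'), hm]
    intro i hi
    have hplen : (wtake g (m - 1)).length = m - 1 := by
      rw [wtake_length]; omega
    rw [hplen] at hi ⊢
    have hit : i ≤ m - 1 := le_trans hi (min_le_left _ _)
    rw [wtake_getVert g (m - 1) (m - 1 - i) (by omega), hqlen]
    exact core q hq i hit

/-- One-sided version of the main theorem. -/
lemma cone_mapsTo {δ : ℝ} (hc : G.Connected) (hδ : 0 ≤ δ)
    (hhyp : IsDeltaHyperbolic G δ) (x y y' : V) (F F' : V → ℤ)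
    (hF : Tournament G δ x y F) (hF' : Tournament G δ x y' F')
    (φ : G ≃g G) (hφy : φ y = y')
    (hφF : ∀ z : V, (G.dist y z : ℝ) ≤ 2*δ+1 → F z = F' (φ z)) :
    ∀ z ∈ cone G x y, φ z ∈ cone G x y' := by
  suffices H : ∀ n : ℕ, ∀ z : V, G.dist y z = n → z ∈ cone G x y →
      G.dist x (φ z) = G.dist x y' + n by
    intro z hz
    show G.dist x (φ z) = G.dist x y' + G.dist y' (φ z)
    rw [show G.dist y' (φ z) = G.dist y z from by rw [← hφy, iso_dist hc φ y z]]
    exact H (G.dist y z) z rfl hz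
  intro n
  induction n with
  | zero =>
    intro z hz0 _
    have hzy : y = z := (hc.dist_eq_zero_iff).mp hz0
    subst hzy
    rw [hφy]
    omega
  | succ n ih =>
    intro z hdyz hz
    have hz' : G.dist x z = G.dist x y + G.dist y z := hz
    rw [hdyz] at hz'
    obtain ⟨r, hr⟩ := exists_geodesic hc y z
    have hrlen : r.length = n + 1 := by rw [(hr : r.length = G.dist y z), hdyz]
    have hyw : G.dist y (r.getVert n) = n := geo_dist_start_getVert hc hr (by omega)
    have hwz : G.dist (r.getVert n) z = 1 := by
      rw [geo_dist_getVert_end hc hr (by omega), hrlen]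
      omega
    have hxw : G.dist x (r.getVert n) = G.dist x y + n := by
      have t1 := hc.dist_triangle (u := x) (v := y) (w := r.getVert n)
      have t2 := hc.dist_triangle (u := x) (v := r.getVert n) (w := z)
      omega
    have hIH : G.dist x (φ (r.getVert n)) = G.dist x y' + n := by
      refine ih (r.getVert n) hyw ?_
      show G.dist x (r.getVert n) = G.dist x y + G.dist y (r.getVert n)
      rw [hyw, hxw]
    have hd2 : G.dist (φ (r.getVert n)) (φ z) = 1 := by
      rw [iso_dist hc φ, hwz]
    have hup : G.dist x (φ z) ≤ G.dist x y' + n + 1 := by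
      have := hc.dist_triangle (u := x) (v := φ (r.getVert n)) (w := φ z)
      omega
    have hlow : G.dist x (φ (r.getVert n)) ≤ G.dist x (φ z) + 1 := by
      have t := hc.dist_triangle (u := x) (v := φ z) (w := φ (r.getVert n))
      have hd2' : G.dist (φ z) (φ (r.getVert n)) = 1 := by
        rw [iso_dist hc φ, SimpleGraph.dist_comm, hwz]
      omega
    by_contra hne
    have hle : G.dist x (φ z) ≤ G.dist x y' + n := by omega
    rcases Nat.eq_zero_or_pos (G.dist x y') with hm0 | hm1
    · have hxy' : x = y' := (hc.dist_eq_zero_iff).mp hm0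
      have : G.dist x (φ z) = n + 1 := by
        rw [hxy', ← hφy, iso_dist hc φ, hdyz]
      omega
    · obtain ⟨g, hg⟩ := exists_geodesic hc x (φ z)
      have hgl : g.length = G.dist x (φ z) := hg
      have hy'e : G.dist y' (φ z) ≤ n + 1 := by
        have t := hc.dist_triangle (u := y') (v := φ (r.getVert n)) (w := φ z)
        have hd1 : G.dist y' (φ (r.getVert n)) = n := by
          rw [← hφy, iso_dist hc φ, hyw]
        omega
      have hcomp := competitor_of_far_geodesic hc hδ hhyp hg rfl hm1 (by omega) (by omega)
      have hxu : G.dist x (g.getVert (G.dist x y' - 1)) = G.dist x y' - 1 :=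
        geo_dist_start_getVert hc hg (by omega)
      have hF'2 := hF'.2 _ hcomp
      rw [hxu] at hF'2
      have hFu : F' (g.getVert (G.dist x y' - 1)) = -1 := by omega
      have hy'u : (G.dist y' (g.getVert (G.dist x y' - 1)) : ℝ) ≤ 2*δ+1 := hcomp.1
      have hyv : G.dist y (φ.symm (g.getVert (G.dist x y' - 1)))
          = G.dist y' (g.getVert (G.dist x y' - 1)) := by
        rw [← iso_dist hc φ y (φ.symm (g.getVert (G.dist x y' - 1))), hφy]
        simp
      have hFvu : F (φ.symm (g.getVert (G.dist x y' - 1))) = -1 := by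
        have h := hφF (φ.symm (g.getVert (G.dist x y' - 1))) (by rw [hyv]; exact hy'u)
        simp only [RelIso.apply_symm_apply] at h
        rw [h, hFu]
      have hxv : G.dist x (φ.symm (g.getVert (G.dist x y' - 1))) + 1 ≤ G.dist x y := by
        have h1 := (hF.1 (φ.symm (g.getVert (G.dist x y' - 1))) (by rw [hyv]; exact hy'u)).1
        rw [hFvu] at h1
        omega
      have hvz : G.dist (φ.symm (g.getVert (G.dist x y' - 1))) z
          = g.length - (G.dist x y' - 1) := by
        rw [← iso_dist hc φ (φ.symm (g.getVert (G.dist x y' - 1))) z]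
        simp only [RelIso.apply_symm_apply]
        exact geo_dist_getVert_end hc hg (by omega)
      have htri := hc.dist_triangle (u := x) (v := φ.symm (g.getVert (G.dist x y' - 1))) (w := z)
      omega

end AuxLemmas

/-- Tournament determines cone type: if `F`, `F'` are tournaments at
`y`, `y'` and `φ ∈ Aut(X)` satisfies `φ(y) = y'` and `F = F' ∘ φ`, then `φ` maps
`cone(y)` onto `cone(y')`. -/
theorem tournament_determines_cone_type {V : Type*} (G : SimpleGraph V) (δ : ℝ)
    (hG : Hyperbolike G δ) (x y y' : V) (F F' : V → ℤ)
    (hF : Tournament G δ x y F) (hF' : Tournament G δ x y' F')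
    (φ : G ≃g G) (hφy : φ y = y')
    (hφF : ∀ z : V, (G.dist y z : ℝ) ≤ 2*δ+1 → F z = F' (φ z)) :
    (fun z : V => φ z) '' cone G x y = cone G x y' := by
  obtain ⟨hc, -, hδ, hhyp, -⟩ := hG
  apply Set.eq_of_subset_of_subset
  · rintro z' ⟨z, hz, rfl⟩
    exact cone_mapsTo hc hδ hhyp x y y' F F' hF hF' φ hφy hφF z hz
  · intro z' hz'
    have hφ'F : ∀ w : V, (G.dist y' w : ℝ) ≤ 2*δ+1 → F' w = F (φ.symm w) := by
      intro w hw
      have hd : G.dist y (φ.symm w) = G.dist y' w := by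
        rw [← iso_dist hc φ y (φ.symm w), hφy]
        simp
      have h := hφF (φ.symm w) (by rw [hd]; exact hw)
      simp only [RelIso.apply_symm_apply] at h
      exact h.symm
    refine ⟨φ.symm z', cone_mapsTo hc hδ hhyp x y' y F' F hF' hF φ.symm
      (by rw [← hφy]; simp) hφ'F z' hz', by simp⟩

end CF
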